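/- There exists an absolute constant C > 0 such that the following holds. Let k, L be integers with 2 ≤ L < k and L dividing k, and let δ : Fin k → ℝ satisfy ∑_{i=1}^k δ_i = 0. Let f be a uniformly random balanced L-coloring of [k] and set Z_r = ∑_{i : f(i)=r} δ_i for r ∈ [L]. Then E[‖Z‖₂⁴] ≤ C·‖δ‖₂⁴. -/

import Mathlib

open scoped BigOperators Classical

/-- The finite set of balanced `L`-colorings of `[k]`: functions `Fin k → Fin L` each of
whose fibers has exactly `k / L` elements. -/
noncomputable def balancedColorings (k L : ℕ) : Finset (Fin k → Fin L) :=
  Finset.univ.filter fun f =>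
    ∀ r : Fin L, (Finset.univ.filter fun i => f i = r).card = k / L

/-- For a coloring `f` and weights `δ`, `partSum δ f r = ∑_{i : f i = r} δ_i`. -/
noncomputable def partSum {k L : ℕ} (δ : Fin k → ℝ) (f : Fin k → Fin L) (r : Fin L) : ℝ :=
  ∑ i ∈ Finset.univ.filter (fun i => f i = r), δ i

/-- Real-valued equality indicator. -/
noncomputable def eR {α : Type*} [DecidableEq α] (a b : α) : ℝ := if a = b then 1 else 0

/-- The polynomial (in equality indicators) form of the count of colorings with
`f i = f j ∧ f p = f q`. -/
noncomputable def polyE (n n2 n3 n4 : ℝ) {α : Type*} [DecidableEq α] (i j p q : α) : ℝ :=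
  n4 + (n3 - n4) * ((eR i p + eR i q + eR j p + eR j q) * (1 - eR i j - eR p q))
    + (n2 - n4) * (eR i j + eR p q)
    + (n2 + n4 - 2*n3) * (eR i p * eR j q + eR i q * eR j p)
    + (n - 2*n2 + n4) * (eR i j * eR p q)
    + (8*n3 - 2*n2 - 6*n4) * (eR i j * eR p q * eR i p)

lemma polyE_eq_ite {α : Type*} [DecidableEq α] (i j p q : α) (n n2 n3 n4 : ℝ) :
    polyE n n2 n3 n4 i j p q
    = (if i = j then (if p = q then n else n2)
       else if p = q then n2
       else if (i = p ∧ j = q) ∨ (i = q ∧ j = p) then n2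
       else if i = p ∨ i = q ∨ j = p ∨ j = q then n3
       else n4) := by
  simp only [polyE, eR]
  by_cases hij : i = j <;> by_cases hpq : p = q <;> by_cases hip : i = p <;>
    by_cases hiq : i = q <;> by_cases hjp : j = p <;> by_cases hjq : j = q <;>
    simp_all <;> ring

lemma exists_perm_comp {t k : ℕ} (u v : Fin t → Fin k) (hu : Function.Injective u)
    (hv : Function.Injective v) : ∃ σ : Equiv.Perm (Fin k), ∀ a, σ (u a) = v a := by
  classical
  let e₀ : (Set.range u) ≃ (Set.range v) :=
    (Equiv.ofInjective u hu).symm.trans (Equiv.ofInjective v hv)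
  have hcard : Fintype.card ((Set.range u)ᶜ : Set (Fin k))
      = Fintype.card ((Set.range v)ᶜ : Set (Fin k)) := by
    rw [Fintype.card_compl_set, Fintype.card_compl_set]
    have h1 : Fintype.card (Set.range u) = Fintype.card (Fin t) :=
      Fintype.card_congr (Equiv.ofInjective u hu).symm
    have h2 : Fintype.card (Set.range v) = Fintype.card (Fin t) :=
      Fintype.card_congr (Equiv.ofInjective v hv).symm
    rw [h1, h2]
  obtain ⟨σ, hσ⟩ := (Equiv.Set.compl e₀).symm (Fintype.equivOfCardEq hcard)
  refine ⟨σ, fun a => ?_⟩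
  have := hσ ⟨u a, Set.mem_range_self a⟩
  simpa [e₀] using this

lemma comp_mem {k L : ℕ} (σ : Equiv.Perm (Fin k)) {f : Fin k → Fin L}
    (hf : f ∈ balancedColorings k L) : (fun x => f (σ x)) ∈ balancedColorings k L := by
  simp only [balancedColorings, Finset.mem_filter, Finset.mem_univ, true_and] at hf ⊢
  intro r
  rw [← hf r]
  apply Finset.card_nbij' (fun i => σ i) (fun j => σ.symm j) <;>
    simp [Set.MapsTo, Set.LeftInvOn, Set.RightInvOn, Finset.mem_filter]

lemma count_comp {k L : ℕ} (σ : Equiv.Perm (Fin k)) (P : (Fin k → Fin L) → Prop) :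
    ((balancedColorings k L).filter fun f => P (fun x => f (σ x))).card
      = ((balancedColorings k L).filter fun f => P f).card := by
  apply Finset.card_nbij' (fun f => fun x => f (σ x)) (fun g => fun x => g (σ.symm x))
  · intro f hf
    simp only [Finset.coe_filter, Finset.mem_coe, Finset.mem_filter, Set.mem_setOf_eq] at hf ⊢
    exact ⟨comp_mem σ hf.1, hf.2⟩
  · intro g hg
    simp only [Finset.coe_filter, Finset.mem_coe, Finset.mem_filter, Set.mem_setOf_eq] at hg ⊢
    refine ⟨comp_mem σ.symm hg.1, ?_⟩
    have : (fun x => g (σ.symm (σ x))) = g := by funext x; simp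
    rw [this]; exact hg.2
  · intro f hf; funext x; simp
  · intro g hg; funext x; simp

lemma inj_pair {k : ℕ} {a b : Fin k} (h : a ≠ b) : Function.Injective ![a, b] := by
  intro x y hxy
  fin_cases x <;> fin_cases y <;> simp_all

lemma inj_triple {k : ℕ} {a b c : Fin k} (hab : a ≠ b) (hac : a ≠ c) (hbc : b ≠ c) :
    Function.Injective ![a, b, c] := by
  intro x y hxy
  fin_cases x <;> fin_cases y <;> simp_all

lemma inj_quad {k : ℕ} {a b c d : Fin k} (hab : a ≠ b) (hac : a ≠ c) (had : a ≠ d)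
    (hbc : b ≠ c) (hbd : b ≠ d) (hcd : c ≠ d) : Function.Injective ![a, b, c, d] := by
  intro x y hxy
  fin_cases x <;> fin_cases y <;> simp_all

lemma count_pair {k L : ℕ} {a b a' b' : Fin k} (h : a ≠ b) (h' : a' ≠ b') :
    ((balancedColorings k L).filter fun f => f a = f b).card
      = ((balancedColorings k L).filter fun f => f a' = f b').card := by
  obtain ⟨σ, hσ⟩ := exists_perm_comp ![a', b'] ![a, b] (inj_pair h') (inj_pair h)
  have h0 : σ a' = a := hσ 0
  have h1 : σ b' = b := hσ 1
  rw [← h0, ← h1]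
  have h := count_comp (L := L) σ (fun g => g a' = g b')
  convert h using 2 <;> (ext f; simp [Finset.mem_filter])

lemma count_triple {k L : ℕ} {a b c a' b' c' : Fin k} (hab : a ≠ b) (hac : a ≠ c)
    (hbc : b ≠ c) (hab' : a' ≠ b') (hac' : a' ≠ c') (hbc' : b' ≠ c') :
    ((balancedColorings k L).filter fun f => f a = f b ∧ f a = f c).card
      = ((balancedColorings k L).filter fun f => f a' = f b' ∧ f a' = f c').card := by
  obtain ⟨σ, hσ⟩ := exists_perm_comp ![a', b', c'] ![a, b, c]
    (inj_triple hab' hac' hbc') (inj_triple hab hac hbc)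
  have h0 : σ a' = a := hσ 0
  have h1 : σ b' = b := hσ 1
  have h2 : σ c' = c := hσ 2
  rw [← h0, ← h1, ← h2]
  have h := count_comp (L := L) σ (fun g => g a' = g b' ∧ g a' = g c')
  convert h using 2 <;> (ext f; simp [Finset.mem_filter])

lemma count_quad {k L : ℕ} {a b c d a' b' c' d' : Fin k} (hab : a ≠ b) (hac : a ≠ c)
    (had : a ≠ d) (hbc : b ≠ c) (hbd : b ≠ d) (hcd : c ≠ d)
    (hab' : a' ≠ b') (hac' : a' ≠ c') (had' : a' ≠ d') (hbc' : b' ≠ c') (hbd' : b' ≠ d')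
    (hcd' : c' ≠ d') :
    ((balancedColorings k L).filter fun f => f a = f b ∧ f c = f d).card
      = ((balancedColorings k L).filter fun f => f a' = f b' ∧ f c' = f d').card := by
  obtain ⟨σ, hσ⟩ := exists_perm_comp ![a', b', c', d'] ![a, b, c, d]
    (inj_quad hab' hac' had' hbc' hbd' hcd') (inj_quad hab hac had hbc hbd hcd)
  have h0 : σ a' = a := hσ 0
  have h1 : σ b' = b := hσ 1
  have h2 : σ c' = c := hσ 2
  have h3 : σ d' = d := hσ 3
  rw [← h0, ← h1, ← h2, ← h3]
  have h := count_comp (L := L) σ (fun g => g a' = g b' ∧ g c' = g d')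
  convert h using 2 <;> (ext f; simp [Finset.mem_filter])

lemma balanced_nonempty {k L m : ℕ} (hL : 0 < L) (hm : 0 < m) (hk : k = L * m) :
    (balancedColorings k L).Nonempty := by
  have hdiv : k / L = m := by rw [hk, Nat.mul_div_cancel_left _ hL]
  have hlt : ∀ i : Fin k, i.1 / m < L := by
    intro i
    have hik : i.1 < m * L := by rw [mul_comm m L, ← hk]; exact i.2
    exact Nat.div_lt_of_lt_mul hik
  refine ⟨fun i => ⟨i.1 / m, hlt i⟩, ?_⟩
  simp only [balancedColorings, Finset.mem_filter, Finset.mem_univ, true_and, hdiv]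
  intro r
  have key : ∀ i : Fin k, ((⟨i.1 / m, hlt i⟩ : Fin L) = r)
      ↔ (m * r.1 ≤ i.1 ∧ i.1 < m * r.1 + m) := by
    intro i
    rw [Fin.ext_iff]
    simp only
    constructor
    · intro h
      have hdm := Nat.div_add_mod i.1 m
      have hmlt := Nat.mod_lt i.1 hm
      rw [h] at hdm
      constructor
      · calc m * r.1 ≤ m * r.1 + i.1 % m := Nat.le_add_right _ _
          _ = i.1 := hdm
      · calc i.1 = m * r.1 + i.1 % m := hdm.symm
          _ < m * r.1 + m := Nat.add_lt_add_left hmlt _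
    · intro ⟨h1, h2⟩
      apply Nat.div_eq_of_lt_le
      · rw [mul_comm]; exact h1
      · rw [add_mul, one_mul, mul_comm]; omega
  rw [Finset.card_bij' (fun (i : Fin k) (_ : i ∈ Finset.univ.filter _) => i.1)
    (fun (j : ℕ) (hj : j ∈ Finset.Ico (m * r.1) (m * r.1 + m)) => (⟨j, by
      simp only [Finset.mem_Ico] at hj
      have hr : r.1 + 1 ≤ L := r.2
      have : m * (r.1 + 1) ≤ m * L := Nat.mul_le_mul_left m hr
      have : m * r.1 + m ≤ m * L := by rw [Nat.mul_add, mul_one] at this; omega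
      have : j < m * L := by omega
      rw [hk, mul_comm]; exact this⟩ : Fin k))
    ?_ ?_ ?_ ?_]
  · simp [Nat.card_Ico]
  · intro a ha
    simp only [Finset.mem_filter, Finset.mem_univ, true_and] at ha
    simp only [Finset.mem_Ico]
    exact (key a).1 ha
  · intro a ha
    simp only [Finset.mem_filter, Finset.mem_univ, true_and]
    have hmem := ha
    simp only [Finset.mem_Ico] at hmem
    have hfin : a < k := by
      have hr : r.1 + 1 ≤ L := r.2
      have h5 : m * (r.1 + 1) ≤ m * L := Nat.mul_le_mul_left m hr
      have h6 : m * r.1 + m ≤ m * L := by rw [Nat.mul_add, mul_one] at h5; omega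
      have h7 : a < m * L := by omega
      rw [hk, mul_comm]; exact h7
    exact (key ⟨a, hfin⟩).2 hmem
  · intro a ha; rfl
  · intro a ha; rfl

/-- Auxiliary closed forms for the level-by-level summation. -/
noncomputable def G3E (n n2 n3 n4 : ℝ) {k : ℕ} (δ : Fin k → ℝ) (i j p : Fin k) : ℝ :=
  ((n3-n4) - (n3-n4) * eR i j + (n2+n4-2*n3) * eR j p) * δ i
  + ((n3-n4) - (n3-n4) * eR i j + (n2+n4-2*n3) * eR i p) * δ j
  + ((n2-n4) + (n-2*n2+n4) * eR i j + (8*n3-2*n2-6*n4) * (eR i j * eR i p)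
      - 2*(n3-n4)*(eR i p + eR j p)) * δ p

noncomputable def G2E (n n2 n3 n4 : ℝ) {k : ℕ} (δ : Fin k → ℝ) (i j : Fin k) : ℝ :=
  2*(n2+n4-2*n3) * (δ i * δ j) + ((n2-n4) + (n-2*n2+n4) * eR i j) * (∑ x, δ x * δ x)
  + (8*n3-2*n2-6*n4) * (eR i j * (δ i * δ i)) - 2*(n3-n4) * (δ i * δ i + δ j * δ j)

noncomputable def G1E (n n2 n3 n4 : ℝ) {k : ℕ} (δ : Fin k → ℝ) (i : Fin k) : ℝ :=
  2*(n2+n4-2*n3) * (∑ x, δ x * δ x) * δ i + (n-2*n2+n4) * (∑ x, δ x * δ x) * δ i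
  + (8*n3-2*n2-6*n4) * (δ i * (δ i * δ i)) - 2*(n3-n4) * (∑ x, δ x * (δ x * δ x))

section SumLemmas

variable {k : ℕ} (δ : Fin k → ℝ)

lemma atom1 (c : Fin k) : ∑ x, δ x * (if c = x then (1:ℝ) else 0) = δ c := by simp

lemma atom1sq (c : Fin k) :
    ∑ x, δ x * (δ x * (if c = x then (1:ℝ) else 0)) = δ c * δ c := by
  rw [Finset.sum_congr rfl (fun x _ => show δ x * (δ x * (if c = x then (1:ℝ) else 0))
    = (if c = x then δ x * δ x else 0) from by by_cases h : c = x <;> simp [h])]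
  simp

lemma atom2 (c c' : Fin k) : ∑ x, δ x * ((if c = x then (1:ℝ) else 0)
    * (if c' = x then (1:ℝ) else 0)) = (if c = c' then (1:ℝ) else 0) * δ c' := by
  by_cases h : c = c'
  · subst h
    rw [Finset.sum_congr rfl (fun x _ => show δ x * ((if c = x then (1:ℝ) else 0)
      * (if c = x then (1:ℝ) else 0)) = δ x * (if c = x then (1:ℝ) else 0) from by
        by_cases hx : c = x <;> simp [hx])]
    rw [atom1 δ c]; simp
  · rw [Finset.sum_eq_zero, if_neg h, zero_mul]
    intro x _
    by_cases h1 : c = x <;> by_cases h2 : c' = x <;> simp_all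

lemma level_q (hsum : ∑ i, δ i = 0) (n n2 n3 n4 : ℝ) (i j p : Fin k) :
    ∑ q, δ q * polyE n n2 n3 n4 i j p q = G3E n n2 n3 n4 δ i j p := by
  calc ∑ q, δ q * polyE n n2 n3 n4 i j p q
      = ∑ q, ((n4 + (n3-n4) * ((eR i p + eR j p) * (1 - eR i j)) + (n2-n4) * eR i j) * δ q
        + ((n3-n4) * (1 - eR i j) + (n2+n4-2*n3) * eR j p)
            * (δ q * (if i = q then (1:ℝ) else 0))
        + ((n3-n4) * (1 - eR i j) + (n2+n4-2*n3) * eR i p)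
            * (δ q * (if j = q then (1:ℝ) else 0))
        + (-(n3-n4) * (eR i p + eR j p) + (n2-n4) + (n-2*n2+n4) * eR i j
            + (8*n3-2*n2-6*n4) * (eR i j * eR i p)) * (δ q * (if p = q then (1:ℝ) else 0))
        + (-(n3-n4)) * (δ q * ((if i = q then (1:ℝ) else 0) * (if p = q then (1:ℝ) else 0)))
        + (-(n3-n4)) * (δ q * ((if j = q then (1:ℝ) else 0) * (if p = q then (1:ℝ) else 0)))) :=
      Finset.sum_congr rfl fun q _ => by simp only [polyE, eR]; ring
    _ = G3E n n2 n3 n4 δ i j p := by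
      simp only [Finset.sum_add_distrib, ← Finset.mul_sum]
      rw [hsum, atom1 δ i, atom1 δ j, atom1 δ p, atom2 δ i p, atom2 δ j p]
      simp only [G3E, eR]
      ring

lemma level_p (hsum : ∑ i, δ i = 0) (n n2 n3 n4 : ℝ) (i j : Fin k) :
    ∑ p, δ p * G3E n n2 n3 n4 δ i j p = G2E n n2 n3 n4 δ i j := by
  calc ∑ p, δ p * G3E n n2 n3 n4 δ i j p
      = ∑ p, ((((n3-n4) - (n3-n4) * eR i j) * (δ i + δ j)) * δ p
        + ((n2+n4-2*n3) * δ j) * (δ p * (if i = p then (1:ℝ) else 0))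
        + ((n2+n4-2*n3) * δ i) * (δ p * (if j = p then (1:ℝ) else 0))
        + ((n2-n4) + (n-2*n2+n4) * eR i j) * (δ p * δ p)
        + ((8*n3-2*n2-6*n4) * eR i j - 2*(n3-n4)) * (δ p * (δ p * (if i = p then (1:ℝ) else 0)))
        + (-2*(n3-n4)) * (δ p * (δ p * (if j = p then (1:ℝ) else 0)))) :=
      Finset.sum_congr rfl fun p _ => by simp only [G3E, eR]; ring
    _ = G2E n n2 n3 n4 δ i j := by
      simp only [Finset.sum_add_distrib, ← Finset.mul_sum]
      rw [hsum, atom1 δ i, atom1 δ j, atom1sq δ i, atom1sq δ j]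
      simp only [G2E, eR]
      ring

lemma level_j (hsum : ∑ i, δ i = 0) (n n2 n3 n4 : ℝ) (i : Fin k) :
    ∑ j, δ j * G2E n n2 n3 n4 δ i j = G1E n n2 n3 n4 δ i := by
  calc ∑ j, δ j * G2E n n2 n3 n4 δ i j
      = ∑ j, (((n2-n4) * (∑ x, δ x * δ x) - 2*(n3-n4) * (δ i * δ i)) * δ j
        + ((n-2*n2+n4) * (∑ x, δ x * δ x) + (8*n3-2*n2-6*n4) * (δ i * δ i))
            * (δ j * (if i = j then (1:ℝ) else 0))
        + (2*(n2+n4-2*n3) * δ i) * (δ j * δ j)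
        + (-2*(n3-n4)) * (δ j * (δ j * δ j))) :=
      Finset.sum_congr rfl fun j _ => by simp only [G2E, eR]; ring
    _ = G1E n n2 n3 n4 δ i := by
      simp only [Finset.sum_add_distrib, ← Finset.mul_sum]
      rw [hsum, atom1 δ i]
      simp only [G1E]
      ring

lemma level_i (hsum : ∑ i, δ i = 0) (n n2 n3 n4 : ℝ) :
    ∑ i, δ i * G1E n n2 n3 n4 δ i
    = (n - 4*n3 + 3*n4) * ((∑ x, δ x * δ x) * (∑ x, δ x * δ x))
      + (8*n3-2*n2-6*n4) * (∑ x, δ x * (δ x * (δ x * δ x))) := by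
  calc ∑ i, δ i * G1E n n2 n3 n4 δ i
      = ∑ i, ((-2*(n3-n4) * (∑ x, δ x * (δ x * δ x))) * δ i
        + (2*(n2+n4-2*n3) * (∑ x, δ x * δ x) + (n-2*n2+n4) * (∑ x, δ x * δ x)) * (δ i * δ i)
        + (8*n3-2*n2-6*n4) * (δ i * (δ i * (δ i * δ i)))) :=
      Finset.sum_congr rfl fun i _ => by simp only [G1E]; ring
    _ = _ := by
      simp only [Finset.sum_add_distrib, ← Finset.mul_sum]
      rw [hsum]
      ring

lemma sum_eval (hsum : ∑ i, δ i = 0) (n n2 n3 n4 : ℝ) :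
    ∑ i, ∑ j, ∑ p, ∑ q, δ i * δ j * (δ p * δ q) * polyE n n2 n3 n4 i j p q
    = (n - 4*n3 + 3*n4) * ((∑ x, δ x * δ x) * (∑ x, δ x * δ x))
      + (8*n3-2*n2-6*n4) * (∑ x, δ x * (δ x * (δ x * δ x))) := by
  calc ∑ i, ∑ j, ∑ p, ∑ q, δ i * δ j * (δ p * δ q) * polyE n n2 n3 n4 i j p q
      = ∑ i, ∑ j, ∑ p, (δ i * δ j * δ p) * (∑ q, δ q * polyE n n2 n3 n4 i j p q) := by
        refine Finset.sum_congr rfl fun i _ => Finset.sum_congr rfl fun j _ =>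
          Finset.sum_congr rfl fun p _ => ?_
        rw [Finset.mul_sum]
        exact Finset.sum_congr rfl fun q _ => by ring
    _ = ∑ i, ∑ j, (δ i * δ j) * (∑ p, δ p * G3E n n2 n3 n4 δ i j p) := by
        refine Finset.sum_congr rfl fun i _ => Finset.sum_congr rfl fun j _ => ?_
        rw [Finset.mul_sum]
        refine Finset.sum_congr rfl fun p _ => ?_
        rw [level_q δ hsum]
        ring
    _ = ∑ i, δ i * (∑ j, δ j * G2E n n2 n3 n4 δ i j) := by
        refine Finset.sum_congr rfl fun i _ => ?_
        rw [Finset.mul_sum]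
        refine Finset.sum_congr rfl fun j _ => ?_
        rw [level_p δ hsum]
        ring
    _ = ∑ i, δ i * G1E n n2 n3 n4 δ i := by
        refine Finset.sum_congr rfl fun i _ => ?_
        rw [level_j δ hsum]
    _ = _ := level_i δ hsum n n2 n3 n4

end SumLemmas

theorem random_flattening_fourth_moment :
    ∃ C : ℝ, 0 < C ∧
      ∀ (k L : ℕ), 2 ≤ L → L < k → L ∣ k →
        ∀ δ : Fin k → ℝ, (∑ i, δ i = 0) →
          (∑ f ∈ balancedColorings k L, (∑ r, partSum δ f r ^ 2) ^ 2)
              / ((balancedColorings k L).card : ℝ)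
            ≤ C * (∑ i, δ i ^ 2) ^ 2 := by
  refine ⟨12, by norm_num, ?_⟩
  intro k L hL2 hLk hdvd δ hsum
  classical
  obtain ⟨m, hm⟩ := hdvd
  have hL0 : 0 < L := by omega
  have hm2 : 2 ≤ m := by
    rcases m with _ | _ | m'
    · rw [Nat.mul_zero] at hm; omega
    · rw [Nat.mul_one] at hm; omega
    · omega
  have hk4 : 4 ≤ k := by
    calc (4:ℕ) = 2 * 2 := rfl
      _ ≤ L * m := Nat.mul_le_mul hL2 hm2
      _ = k := hm.symm
  have hBne : (balancedColorings k L).Nonempty := balanced_nonempty hL0 (by omega) hm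
  have hcard : 0 < (balancedColorings k L).card := Finset.card_pos.mpr hBne
  obtain ⟨i0, i1, i2, i3, h01, h02, h03, h12, h13, h23⟩ :
      ∃ a b c d : Fin k, a ≠ b ∧ a ≠ c ∧ a ≠ d ∧ b ≠ c ∧ b ≠ d ∧ c ≠ d :=
    ⟨⟨0, by omega⟩, ⟨1, by omega⟩, ⟨2, by omega⟩, ⟨3, by omega⟩,
      by simp [Fin.ext_iff], by simp [Fin.ext_iff], by simp [Fin.ext_iff],
      by simp [Fin.ext_iff], by simp [Fin.ext_iff], by simp [Fin.ext_iff]⟩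
  set n : ℝ := ((balancedColorings k L).card : ℝ) with hndef
  set n2 : ℝ := (((balancedColorings k L).filter fun f => f i0 = f i1).card : ℝ) with hn2def
  set n3 : ℝ := (((balancedColorings k L).filter fun f => f i0 = f i1 ∧ f i0 = f i2).card : ℝ)
    with hn3def
  set n4 : ℝ := (((balancedColorings k L).filter fun f => f i0 = f i1 ∧ f i2 = f i3).card : ℝ)
    with hn4def
  have cardP : ∀ a b : Fin k, a ≠ b →
      (((balancedColorings k L).filter fun f => f a = f b).card : ℝ) = n2 := by
    intro a b hab
    rw [hn2def]
    exact_mod_cast count_pair hab h01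
  have cardT : ∀ a b c : Fin k, a ≠ b → a ≠ c → b ≠ c →
      (((balancedColorings k L).filter fun f => f a = f b ∧ f a = f c).card : ℝ) = n3 := by
    intro a b c hab hac hbc
    rw [hn3def]
    exact_mod_cast count_triple hab hac hbc h01 h02 h12
  have cardQ : ∀ a b c d : Fin k, a ≠ b → a ≠ c → a ≠ d → b ≠ c → b ≠ d → c ≠ d →
      (((balancedColorings k L).filter fun f => f a = f b ∧ f c = f d).card : ℝ) = n4 := by
    intro a b c d hab hac had hbc hbd hcd
    rw [hn4def]
    exact_mod_cast count_quad hab hac had hbc hbd hcd h01 h02 h03 h12 h13 h23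
  have filtIff : ∀ (P Q : (Fin k → Fin L) → Prop) (d1 : DecidablePred P)
      (d2 : DecidablePred Q), (∀ f, P f ↔ Q f) →
      @Finset.filter _ P d1 (balancedColorings k L)
        = @Finset.filter _ Q d2 (balancedColorings k L) := by
    intro P Q d1 d2 h; ext f; simp [Finset.mem_filter, h f]
  have hpoly : ∀ i j p q : Fin k,
      (((balancedColorings k L).filter fun f => f i = f j ∧ f p = f q).card : ℝ)
        = polyE n n2 n3 n4 i j p q := by
    intro i j p q
    rw [polyE_eq_ite]
    by_cases hij : i = j
    · subst hij
      rw [if_pos rfl]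
      by_cases hpq : p = q
      · subst hpq
        rw [if_pos rfl]
        have e : Finset.filter (fun f : Fin k → Fin L => f i = f i ∧ f p = f p)
            (balancedColorings k L) = balancedColorings k L :=
          Finset.filter_true_of_mem fun f _ => ⟨rfl, rfl⟩
        rw [e, hndef]
      · rw [if_neg hpq]
        have e : Finset.filter (fun f : Fin k → Fin L => f i = f i ∧ f p = f q)
            (balancedColorings k L)
            = Finset.filter (fun f => f p = f q) (balancedColorings k L) :=
          filtIff _ _ _ _ fun f => and_iff_right rfl
        rw [e]
        exact cardP p q hpq
    · rw [if_neg hij]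
      by_cases hpq : p = q
      · subst hpq
        rw [if_pos rfl]
        have e : Finset.filter (fun f : Fin k → Fin L => f i = f j ∧ f p = f p)
            (balancedColorings k L)
            = Finset.filter (fun f => f i = f j) (balancedColorings k L) :=
          filtIff _ _ _ _ fun f => and_iff_left rfl
        rw [e]
        exact cardP i j hij
      · rw [if_neg hpq]
        by_cases hset : (i = p ∧ j = q) ∨ (i = q ∧ j = p)
        · rw [if_pos hset]
          rcases hset with ⟨h1, h2⟩ | ⟨h1, h2⟩
          · subst h1; subst h2
            have e : Finset.filter (fun f : Fin k → Fin L => f i = f j ∧ f i = f j)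
                (balancedColorings k L)
                = Finset.filter (fun f => f i = f j) (balancedColorings k L) :=
              filtIff _ _ _ _ fun f => and_self_iff
            rw [e]
            exact cardP i j hij
          · subst h1; subst h2
            have e : Finset.filter (fun f : Fin k → Fin L => f i = f j ∧ f j = f i)
                (balancedColorings k L)
                = Finset.filter (fun f => f i = f j) (balancedColorings k L) :=
              filtIff _ _ _ _ fun f => ⟨fun h => h.1, fun h => ⟨h, h.symm⟩⟩
            rw [e]
            exact cardP i j hij
        · rw [if_neg hset]
          push_neg at hset
          by_cases hcr : i = p ∨ i = q ∨ j = p ∨ j = q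
          · rw [if_pos hcr]
            rcases hcr with h | h | h | h
            · subst h
              exact cardT i j q hij hpq (hset.1 rfl)
            · subst h
              have e : Finset.filter (fun f : Fin k → Fin L => f i = f j ∧ f p = f i)
                  (balancedColorings k L)
                  = Finset.filter (fun f => f i = f j ∧ f i = f p) (balancedColorings k L) :=
                filtIff _ _ _ _ fun f => ⟨fun h => ⟨h.1, h.2.symm⟩, fun h => ⟨h.1, h.2.symm⟩⟩
              rw [e]
              exact cardT i j p hij (fun h => hpq h.symm) (hset.2 rfl)
            · subst h
              have e : Finset.filter (fun f : Fin k → Fin L => f i = f j ∧ f j = f q)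
                  (balancedColorings k L)
                  = Finset.filter (fun f => f j = f i ∧ f j = f q) (balancedColorings k L) :=
                filtIff _ _ _ _ fun f => ⟨fun h => ⟨h.1.symm, h.2⟩, fun h => ⟨h.1.symm, h.2⟩⟩
              rw [e]
              exact cardT j i q (Ne.symm hij) hpq (fun h => hset.2 h rfl)
            · subst h
              have e : Finset.filter (fun f : Fin k → Fin L => f i = f j ∧ f p = f j)
                  (balancedColorings k L)
                  = Finset.filter (fun f => f j = f i ∧ f j = f p) (balancedColorings k L) :=
                filtIff _ _ _ _ fun f => ⟨fun h => ⟨h.1.symm, h.2.symm⟩,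
                  fun h => ⟨h.1.symm, h.2.symm⟩⟩
              rw [e]
              exact cardT j i p (Ne.symm hij) (Ne.symm hpq) (fun h => hset.1 h rfl)
          · rw [if_neg hcr]
            push_neg at hcr
            exact cardQ i j p q hij hcr.1 hcr.2.1 hcr.2.2.1 hcr.2.2.2 hpq
  have hQ : ∀ f : Fin k → Fin L, (∑ r, partSum δ f r ^ 2)
      = ∑ i, ∑ j, (if f i = f j then δ i * δ j else 0) := by
    intro f
    calc ∑ r, partSum δ f r ^ 2
        = ∑ r, ∑ i ∈ Finset.univ.filter fun i => f i = r, (δ i * partSum δ f r) := by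
          refine Finset.sum_congr rfl fun r _ => ?_
          rw [sq]
          nth_rewrite 1 [partSum]
          rw [Finset.sum_mul]
      _ = ∑ r, ∑ i ∈ Finset.univ.filter fun i => f i = r, (δ i * partSum δ f (f i)) := by
          refine Finset.sum_congr rfl fun r _ => Finset.sum_congr rfl fun i hi => ?_
          rw [(Finset.mem_filter.mp hi).2]
      _ = ∑ i, δ i * partSum δ f (f i) := Finset.sum_fiberwise _ _ _
      _ = ∑ i, ∑ j, (if f i = f j then δ i * δ j else 0) := by
          refine Finset.sum_congr rfl fun i _ => ?_
          rw [partSum, Finset.mul_sum, Finset.sum_filter]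
          exact Finset.sum_congr rfl fun j _ => if_congr eq_comm rfl rfl
  have hS : ∑ f ∈ balancedColorings k L, (∑ r, partSum δ f r ^ 2) ^ 2
      = ∑ i, ∑ j, ∑ p, ∑ q, δ i * δ j * (δ p * δ q) *
          (((balancedColorings k L).filter fun f => f i = f j ∧ f p = f q).card : ℝ) := by
    calc ∑ f ∈ balancedColorings k L, (∑ r, partSum δ f r ^ 2) ^ 2
        = ∑ f ∈ balancedColorings k L, ∑ i, ∑ p, ∑ j, ∑ q,
            (if f i = f j then δ i * δ j else 0) * (if f p = f q then δ p * δ q else 0) := by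
          refine Finset.sum_congr rfl fun f _ => ?_
          rw [hQ f, sq, Finset.sum_mul_sum]
          refine Finset.sum_congr rfl fun i _ => Finset.sum_congr rfl fun p _ => ?_
          rw [Finset.sum_mul_sum]
      _ = ∑ i, ∑ p, ∑ j, ∑ q, ∑ f ∈ balancedColorings k L,
            (if f i = f j then δ i * δ j else 0) * (if f p = f q then δ p * δ q else 0) := by
          rw [Finset.sum_comm]
          refine Finset.sum_congr rfl fun i _ => ?_
          rw [Finset.sum_comm]
          refine Finset.sum_congr rfl fun p _ => ?_
          rw [Finset.sum_comm]
          refine Finset.sum_congr rfl fun j _ => ?_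
          rw [Finset.sum_comm]
      _ = ∑ i, ∑ p, ∑ j, ∑ q, δ i * δ j * (δ p * δ q) *
            (((balancedColorings k L).filter fun f => f i = f j ∧ f p = f q).card : ℝ) := by
          refine Finset.sum_congr rfl fun i _ => Finset.sum_congr rfl fun p _ =>
            Finset.sum_congr rfl fun j _ => Finset.sum_congr rfl fun q _ => ?_
          calc ∑ f ∈ balancedColorings k L,
                (if f i = f j then δ i * δ j else 0) * (if f p = f q then δ p * δ q else 0)
              = ∑ f ∈ balancedColorings k L,
                  (if f i = f j ∧ f p = f q then δ i * δ j * (δ p * δ q) else 0) :=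
                Finset.sum_congr rfl fun f _ => by
                  by_cases h1 : f i = f j <;> by_cases h2 : f p = f q <;> simp [h1, h2]
            _ = ∑ f ∈ (balancedColorings k L).filter fun f => f i = f j ∧ f p = f q,
                  δ i * δ j * (δ p * δ q) := (Finset.sum_filter _ _).symm
            _ = ((balancedColorings k L).filter fun f => f i = f j ∧ f p = f q).card
                  • (δ i * δ j * (δ p * δ q)) := Finset.sum_const _
            _ = δ i * δ j * (δ p * δ q) *
                  (((balancedColorings k L).filter fun f => f i = f j ∧ f p = f q).card : ℝ) := by
                rw [nsmul_eq_mul]; ring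
      _ = ∑ i, ∑ j, ∑ p, ∑ q, δ i * δ j * (δ p * δ q) *
            (((balancedColorings k L).filter fun f => f i = f j ∧ f p = f q).card : ℝ) :=
          Finset.sum_congr rfl fun i _ => Finset.sum_comm
  have hval : ∑ f ∈ balancedColorings k L, (∑ r, partSum δ f r ^ 2) ^ 2
      = (n - 4*n3 + 3*n4) * ((∑ x, δ x * δ x) * (∑ x, δ x * δ x))
        + (8*n3-2*n2-6*n4) * (∑ x, δ x * (δ x * (δ x * δ x))) := by
    rw [hS]
    calc ∑ i, ∑ j, ∑ p, ∑ q, δ i * δ j * (δ p * δ q) *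
          (((balancedColorings k L).filter fun f => f i = f j ∧ f p = f q).card : ℝ)
        = ∑ i, ∑ j, ∑ p, ∑ q, δ i * δ j * (δ p * δ q) * polyE n n2 n3 n4 i j p q :=
          Finset.sum_congr rfl fun i _ => Finset.sum_congr rfl fun j _ =>
            Finset.sum_congr rfl fun p _ => Finset.sum_congr rfl fun q _ => by rw [hpoly]
      _ = _ := sum_eval δ hsum n n2 n3 n4
  have hnpos : (0:ℝ) < n := by rw [hndef]; exact_mod_cast hcard
  rw [div_le_iff₀ hnpos, hval]
  have hS2 : (∑ i, δ i ^ 2) = ∑ x, δ x * δ x := Finset.sum_congr rfl fun x _ => sq (δ x)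
  rw [hS2]
  have hs2nn : (0:ℝ) ≤ ∑ x, δ x * δ x := Finset.sum_nonneg fun x _ => mul_self_nonneg _
  have hs4nn : (0:ℝ) ≤ ∑ x, δ x * (δ x * (δ x * δ x)) := by
    refine Finset.sum_nonneg fun x _ => ?_
    have h : δ x * (δ x * (δ x * δ x)) = (δ x * δ x) * (δ x * δ x) := by ring
    rw [h]; exact mul_self_nonneg _
  have hs4le : (∑ x, δ x * (δ x * (δ x * δ x))) ≤ (∑ x, δ x * δ x) * (∑ x, δ x * δ x) := by
    have h := Finset.sum_sq_le_sq_sum_of_nonneg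
      (s := (Finset.univ : Finset (Fin k))) (f := fun x => δ x * δ x)
      (fun i _ => mul_self_nonneg _)
    calc ∑ x, δ x * (δ x * (δ x * δ x)) = ∑ x, (δ x * δ x)^2 :=
        Finset.sum_congr rfl fun x _ => by ring
      _ ≤ (∑ x, δ x * δ x)^2 := h
      _ = _ := sq _
  have hnn : (0:ℝ) ≤ n := le_of_lt hnpos
  have hn2nn : (0:ℝ) ≤ n2 := by rw [hn2def]; exact Nat.cast_nonneg _
  have hn3nn : (0:ℝ) ≤ n3 := by rw [hn3def]; exact Nat.cast_nonneg _
  have hn4nn : (0:ℝ) ≤ n4 := by rw [hn4def]; exact Nat.cast_nonneg _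
  have hn3le : n3 ≤ n := by
    rw [hn3def, hndef]
    exact_mod_cast Finset.card_filter_le _ _
  have hn4le : n4 ≤ n := by
    rw [hn4def, hndef]
    exact_mod_cast Finset.card_filter_le _ _
  nlinarith [mul_nonneg hnn (mul_nonneg hs2nn hs2nn),
    mul_nonneg (sub_nonneg.2 hn3le) (mul_nonneg hs2nn hs2nn),
    mul_nonneg (sub_nonneg.2 hn4le) (mul_nonneg hs2nn hs2nn),
    mul_nonneg hn3nn (sub_nonneg.2 hs4le),
    mul_nonneg hn2nn hs4nn,
    mul_nonneg hn4nn hs4nn]
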